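/- Let n ∈ ℝ³ be a unit vector, let v ∈ ℝ³ be nonzero with v · n = 0, and let g, w ∈ ℝ³ satisfy (D(v) g) · n = 0 and (D(v) w) · n = 0. Then [(Ê(v) ⊗ g) w] · n = 0, i.e., Σ_{k=1}^{3} n_k Σ_{i=1}^{3} (Σ_{j=1}^{3} ∂_{v_k} D_{ij}(v) g_j) w_i = 0. -/

import Mathlib

open scoped BigOperators

/-- Euclidean norm of a vector in ℝ³. -/
noncomputable def norm3 (v : Fin 3 → ℝ) : ℝ := Real.sqrt (∑ i, v i ^ 2)

/-- The 3D Bear–Scheidegger diffusion–dispersion tensor. -/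
noncomputable def bsD (φ dm dt dl : ℝ) (v : Fin 3 → ℝ) (i j : Fin 3) : ℝ :=
  (φ * dm + dt * norm3 v) * (if i = j then (1 : ℝ) else 0) + (dl - dt) * v i * v j / norm3 v

/-- The partial derivative `∂_{v_k} D_{ij}(v)`. -/
noncomputable def pD (φ dm dt dl : ℝ) (v : Fin 3 → ℝ) (i j k : Fin 3) : ℝ :=
  fderiv ℝ (fun u => bsD φ dm dt dl u i j) v (Pi.single k 1)

lemma sq_sum_pos (v : Fin 3 → ℝ) (hv : v ≠ 0) : 0 < ∑ i, v i ^ 2 := by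
  obtain ⟨m, hm⟩ := Function.ne_iff.mp hv
  exact Finset.sum_pos' (fun i _ => sq_nonneg _)
    ⟨m, Finset.mem_univ m, by have := pow_pos (abs_pos.mpr hm) 2; simpa [sq_abs] using this⟩

lemma norm3_pos (v : Fin 3 → ℝ) (hv : v ≠ 0) : 0 < norm3 v :=
  Real.sqrt_pos.mpr (sq_sum_pos v hv)

open ContinuousLinearMap in
lemma hasFDerivAt_sq_sum (v : Fin 3 → ℝ) :
    HasFDerivAt (fun u : Fin 3 → ℝ => ∑ i, u i ^ 2)
      (∑ i : Fin 3, (2 * v i) • proj (R := ℝ) (φ := fun _ : Fin 3 => ℝ) i) v := by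
  apply HasFDerivAt.fun_sum
  intro m _
  have h := (hasFDerivAt_apply (𝕜 := ℝ) m v).fun_mul (hasFDerivAt_apply (𝕜 := ℝ) m v)
  have : (fun u : Fin 3 → ℝ => u m ^ 2) = fun u => u m * u m := by
    funext u; ring
  rw [this]
  convert h using 1
  ext z
  simp [two_mul]; ring
  rw [mul_two, add_smul]

open ContinuousLinearMap in
lemma hasFDerivAt_norm3 (v : Fin 3 → ℝ) (hv : v ≠ 0) :
    HasFDerivAt norm3
      ((1 / (2 * norm3 v)) • ∑ i : Fin 3, (2 * v i) • proj (R := ℝ) (φ := fun _ : Fin 3 => ℝ) i) v := by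
  have hs := sq_sum_pos v hv
  have h := (Real.hasDerivAt_sqrt hs.ne').comp_hasFDerivAt v (hasFDerivAt_sq_sum v)
  have hns : Real.sqrt (∑ i, v i ^ 2) = norm3 v := rfl
  simp [Function.comp, norm3, smul_smul] at h ⊢; exact h

lemma pD_eq (φ dm dt dl : ℝ) (v : Fin 3 → ℝ) (hv : v ≠ 0) (i j k : Fin 3) :
    pD φ dm dt dl v i j k =
      dt * (v k / norm3 v) * (if i = j then (1:ℝ) else 0)
      + (dl - dt) * (((if i = k then (1:ℝ) else 0) * v j + (if j = k then (1:ℝ) else 0) * v i) / norm3 v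
          - v i * v j * v k / norm3 v ^ 3) := by
  have hr := norm3_pos v hv
  set c : ℝ := if i = j then (1:ℝ) else 0 with hc
  have hnorm := hasFDerivAt_norm3 v hv
  have hinv := (hasDerivAt_inv hr.ne').comp_hasFDerivAt v hnorm
  have H := (((hasFDerivAt_const (φ * dm) v).fun_add (hnorm.const_mul dt)).mul_const c).fun_add
    ((((hasFDerivAt_apply (𝕜 := ℝ) i v).const_mul (dl - dt)).fun_mul
      (hasFDerivAt_apply (𝕜 := ℝ) j v)).fun_mul hinv)
  have hfun : (fun u => bsD φ dm dt dl u i j) =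
      (fun u : Fin 3 → ℝ => (φ * dm + dt * norm3 u) * c + (dl - dt) * u i * u j * ((fun y : ℝ => y⁻¹) ∘ norm3) u) := by
    funext u; simp [bsD, div_eq_mul_inv, hc]
  rw [pD, hfun]
  rw [H.fderiv]
  simp only [ContinuousLinearMap.add_apply, ContinuousLinearMap.smul_apply,
    ContinuousLinearMap.coe_smul', Pi.smul_apply, ContinuousLinearMap.sum_apply,
    ContinuousLinearMap.proj_apply, ContinuousLinearMap.smulRight_apply, smul_eq_mul,
    Pi.single_apply, Finset.mul_sum]
  simp only [mul_ite, mul_one, mul_zero, Finset.sum_ite_eq', Finset.mem_univ, if_true,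
    ContinuousLinearMap.zero_apply, Function.comp]
  by_cases hik : i = k <;> by_cases hjk : j = k <;>
    simp only [hik, hjk, if_true, if_neg, ite_true, ite_false] <;> field_simp <;> ring


theorem stmt19 (φ dm dt dl : ℝ) (hφ : 0 < φ) (hdm : 0 < dm) (hdt : 0 < dt) (hdl : 0 < dl)
    (n v g w : Fin 3 → ℝ) (hn : ∑ i, n i ^ 2 = 1) (hv : v ≠ 0)
    (hvn : ∑ i, v i * n i = 0)
    (hg : ∑ i, (∑ j, bsD φ dm dt dl v i j * g j) * n i = 0)
    (hw : ∑ i, (∑ j, bsD φ dm dt dl v i j * w j) * n i = 0) :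
    ∑ k, n k * ∑ i, (∑ j, pD φ dm dt dl v i j k * g j) * w i = 0 := by
  have hr := norm3_pos v hv
  have hrne : norm3 v ≠ 0 := hr.ne'
  set r : ℝ := norm3 v with hrdef
  simp only [bsD, Fin.sum_univ_three] at hg hw
  simp only [Fin.sum_univ_three] at hvn
  simp only [Fin.reduceEq, reduceIte, zero_add, add_zero] at hg hw
  have hpos : (0:ℝ) < φ * dm + dt * r := by positivity
  have hgn : g 0 * n 0 + g 1 * n 1 + g 2 * n 2 = 0 := by
    have h1 : (φ * dm + dt * r) * (g 0 * n 0 + g 1 * n 1 + g 2 * n 2) = 0 := by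
      linear_combination hg - ((dl - dt) * (v 0 * g 0 + v 1 * g 1 + v 2 * g 2) / r) * hvn
    exact (mul_eq_zero.mp h1).resolve_left hpos.ne'
  have hwn : w 0 * n 0 + w 1 * n 1 + w 2 * n 2 = 0 := by
    have h1 : (φ * dm + dt * r) * (w 0 * n 0 + w 1 * n 1 + w 2 * n 2) = 0 := by
      linear_combination hw - ((dl - dt) * (v 0 * w 0 + v 1 * w 1 + v 2 * w 2) / r) * hvn
    exact (mul_eq_zero.mp h1).resolve_left hpos.ne'
  simp only [pD_eq φ dm dt dl v hv, Fin.sum_univ_three, Fin.reduceEq, reduceIte,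
    one_mul, zero_mul, mul_one, mul_zero, add_zero, zero_add]
  linear_combination
    (dt * (g 0 * w 0 + g 1 * w 1 + g 2 * w 2) / r
      - (dl - dt) * (v 0 * g 0 + v 1 * g 1 + v 2 * g 2) * (v 0 * w 0 + v 1 * w 1 + v 2 * w 2) / r ^ 3) * hvn
    + ((dl - dt) * (v 0 * g 0 + v 1 * g 1 + v 2 * g 2) / r) * hwn
    + ((dl - dt) * (v 0 * w 0 + v 1 * w 1 + v 2 * w 2) / r) * hgn
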